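/- Equivalence of in-control detection via the reflected chart: with 0 < k_U ≤ h, increments (ℓ_t), upper chart R_t (R₀ = h, R_t = min(max(R_{t−1}+ℓ_t,0),h)) and the classical CUSUM with negated increments S_t (S₀ = 0, S_t = max(S_{t−1} − ℓ_t, 0)), one has inf{t ≥ 1 : S_t ≥ k_U} = inf{t ≥ 1 : R_t ≤ h − k_U}. -/

import Mathlib

noncomputable def chart (h : ℝ) (ℓ : ℕ → ℝ) (x : ℝ) : ℕ → ℝ
  | 0 => x
  | t + 1 => min (max (chart h ℓ x t + ℓ (t + 1)) 0) h

noncomputable def classicalCusum (ℓ : ℕ → ℝ) : ℕ → ℝ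
  | 0 => 0
  | t + 1 => max (classicalCusum ℓ t + ℓ (t + 1)) 0

lemma lemA (h : ℝ) (hh : 0 ≤ h) (ℓ : ℕ → ℝ) :
    ∀ t, h - chart h ℓ h t ≤ classicalCusum (fun s => -ℓ s) t := by
  intro t
  induction t with
  | zero => simp [chart, classicalCusum]
  | succ n ih =>
    simp only [chart, classicalCusum]
    rcases le_total (chart h ℓ h n + ℓ (n + 1)) 0 with h1 | h1
    · rw [max_eq_right h1, min_eq_left hh]
      have : h ≤ classicalCusum (fun s => -ℓ s) n + -ℓ (n + 1) := by linarith
      exact le_trans (by linarith) (le_max_left _ _)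
    · rw [max_eq_left h1]
      rcases le_total (chart h ℓ h n + ℓ (n + 1)) h with h2 | h2
      · rw [min_eq_left h2]
        exact le_trans (by linarith) (le_max_left _ _)
      · rw [min_eq_right h2]
        simp

lemma lemD (h : ℝ) (hh : 0 ≤ h) (ℓ : ℕ → ℝ) :
    ∀ t, (∀ s < t, classicalCusum (fun s => -ℓ s) s < h) →
      h - chart h ℓ h t = min (classicalCusum (fun s => -ℓ s) t) h := by
  intro t
  induction t with
  | zero => intro _; simp [chart, classicalCusum, hh]
  | succ n ih =>
    intro hb
    have hSn : classicalCusum (fun s => -ℓ s) n < h := hb n (Nat.lt_succ_self n)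
    have ihn : h - chart h ℓ h n = classicalCusum (fun s => -ℓ s) n := by
      rw [ih (fun s hs => hb s (hs.trans (Nat.lt_succ_self n))), min_eq_left hSn.le]
    simp only [chart, classicalCusum]
    set a := classicalCusum (fun s => -ℓ s) n with ha
    have hR : chart h ℓ h n = h - a := by linarith
    rw [hR]
    rcases le_total (a + -ℓ (n + 1)) 0 with h1 | h1
    · rw [max_eq_right h1, min_eq_left hh]
      have h2 : h ≤ h - a + ℓ (n + 1) := by linarith
      rw [max_eq_left (hh.trans h2), min_eq_right h2]
      ring
    · rw [max_eq_left h1]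
      rcases le_total (a + -ℓ (n + 1)) h with h2 | h2
      · rw [min_eq_left h2]
        have h3 : 0 ≤ h - a + ℓ (n + 1) := by linarith
        have h4 : h - a + ℓ (n + 1) ≤ h := by linarith
        rw [max_eq_left h3, min_eq_left h4]
        ring
      · rw [min_eq_right h2]
        have h3 : h - a + ℓ (n + 1) ≤ 0 := by linarith
        rw [max_eq_right h3, min_eq_left hh]
        ring

theorem in_control_detection_reflected (h kU : ℝ) (hh : 0 < h) (hk0 : 0 < kU)
    (hkh : kU ≤ h) (ℓ : ℕ → ℝ) :
    sInf ((fun t : ℕ => (t : ℕ∞)) ''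
        {t : ℕ | 1 ≤ t ∧ kU ≤ classicalCusum (fun s => -ℓ s) t})
      = sInf ((fun t : ℕ => (t : ℕ∞)) ''
        {t : ℕ | 1 ≤ t ∧ chart h ℓ h t ≤ h - kU}) := by
  set S : ℕ → ℝ := classicalCusum (fun s => -ℓ s) with hSdef
  set A : Set ℕ := {t : ℕ | 1 ≤ t ∧ kU ≤ S t} with hA
  set B : Set ℕ := {t : ℕ | 1 ≤ t ∧ chart h ℓ h t ≤ h - kU} with hB
  have hBA : B ⊆ A := by
    intro t ht
    obtain ⟨ht1, ht2⟩ := ht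
    refine ⟨ht1, ?_⟩
    have := lemA h hh.le ℓ t
    rw [← hSdef] at this
    linarith
  refine le_antisymm (sInf_le_sInf (Set.image_mono hBA)) ?_
  by_cases hne : A.Nonempty
  · set T := sInf A with hT
    have hTA : T ∈ A := Nat.sInf_mem hne
    have hTB : T ∈ B := by
      have hlt : ∀ s < T, S s < h := by
        intro s hs
        rcases Nat.eq_zero_or_pos s with rfl | hs1
        · simp only [hSdef, classicalCusum]
          linarith
        · have : s ∉ A := Nat.notMem_of_lt_sInf hs
          simp only [hA, Set.mem_setOf_eq, not_and, not_le] at this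
          exact lt_of_lt_of_le (this hs1) hkh
      have hD := lemD h hh.le ℓ T hlt
      rw [← hSdef] at hD
      refine ⟨hTA.1, ?_⟩
      have : kU ≤ min (S T) h := le_min hTA.2 hkh
      linarith
    calc sInf ((fun t : ℕ => (t : ℕ∞)) '' B) ≤ (T : ℕ∞) :=
          sInf_le ⟨T, hTB, rfl⟩
      _ ≤ sInf ((fun t : ℕ => (t : ℕ∞)) '' A) := by
          refine le_sInf ?_
          rintro b ⟨a, haA, rfl⟩
          exact Nat.cast_le.mpr (Nat.sInf_le haA)
  · have : A = ∅ := Set.not_nonempty_iff_eq_empty.mp hne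
    simp [this, Set.eq_empty_iff_forall_notMem.mp this]
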